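/- Let M be a von Neumann algebra without central summands of type I₁ and let L : M → M be an additive map satisfying L(A)B + AL(B) = 0 whenever AB = 0 (the case ξ = 0). Then L(I) ∈ Z(M) and the map φ(A) = L(A) − L(I)A is an additive derivation; equivalently, L(AB) = L(A)B + AL(B) − L(I)AB for all A, B ∈ M. -/

import Mathlib

variable {H : Type*} [NormedAddCommGroup H] [InnerProductSpace ℂ H] [CompleteSpace H]

/-- `Z` lies in the center of the von Neumann algebra `M`. -/
def VonNeumannAlgebra.IsCentral (M : VonNeumannAlgebra H) (Z : H →L[ℂ] H) : Prop :=
  Z ∈ M ∧ ∀ A ∈ M, Z * A = A * Z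

/-- `P` is a projection (self-adjoint idempotent) in `M`. -/
def VonNeumannAlgebra.IsProjection (M : VonNeumannAlgebra H) (P : H →L[ℂ] H) : Prop :=
  P ∈ M ∧ P * P = P ∧ star P = P

/-- `Q` is a central projection of `M`. -/
def VonNeumannAlgebra.IsCentralProjection (M : VonNeumannAlgebra H) (Q : H →L[ℂ] H) : Prop :=
  M.IsCentral Q ∧ Q * Q = Q ∧ star Q = Q

/-- The core of the projection `P` (the largest central projection below `P`) is zero,
i.e. the only central projection `Q` with `Q ≤ P` (equivalently `Q * P = Q`) is `0`. -/
def VonNeumannAlgebra.CoreZero (M : VonNeumannAlgebra H) (P : H →L[ℂ] H) : Prop :=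
  ∀ Q : H →L[ℂ] H, M.IsCentralProjection Q → Q * P = Q → Q = 0

/-- The central carrier of the projection `P` (the smallest central projection above `P`)
is `1`, i.e. the only central projection `Q` with `Q * P = P` is `1`. -/
def VonNeumannAlgebra.CarrierOne (M : VonNeumannAlgebra H) (P : H →L[ℂ] H) : Prop :=
  ∀ Q : H →L[ℂ] H, M.IsCentralProjection Q → Q * P = P → Q = 1

/-- `M` has no central summand of type I₁: equivalently, `M` contains a projection
with core `0` and central carrier `1`. -/
def VonNeumannAlgebra.NoTypeI1 (M : VonNeumannAlgebra H) : Prop :=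
  ∃ P : H →L[ℂ] H, M.IsProjection P ∧ M.CoreZero P ∧ M.CarrierOne P

private lemma commute_proj_aux (K : Submodule ℂ H) [CompleteSpace K]
    (T : H →L[ℂ] H) (h1 : ∀ x ∈ K, T x ∈ K) (h2 : ∀ x ∈ K, (star T) x ∈ K) :
    T * (K.subtypeL ∘L K.orthogonalProjectionOnto) = (K.subtypeL ∘L K.orthogonalProjectionOnto) * T := by
  set Q : H →L[ℂ] H := K.subtypeL ∘L K.orthogonalProjectionOnto with hQdef
  have hQmemK : ∀ x : H, Q x ∈ K := fun x => (K.orthogonalProjectionOnto x).2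
  have hQfix : ∀ x ∈ K, Q x = x := by
    intro x hx
    exact Submodule.starProjection_eq_self_iff.mpr hx
  have hstar : star Q = Q := isSelfAdjoint_starProjection K
  have e1 : Q * (T * Q) = T * Q := by
    ext x; exact hQfix _ (h1 _ (hQmemK x))
  have e2 : Q * (star T * Q) = star T * Q := by
    ext x; exact hQfix _ (h2 _ (hQmemK x))
  have e3 : Q * T * Q = Q * T := by
    have := congrArg star e2
    simpa [star_mul, hstar, mul_assoc] using this
  calc T * Q = Q * (T * Q) := e1.symm
    _ = Q * T * Q := by rw [mul_assoc]
    _ = Q * T := e3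

private lemma support_lemma (M : VonNeumannAlgebra H) (E : H →L[ℂ] H) (hE : E ∈ M) :
    ∃ Q : H →L[ℂ] H, M.IsCentralProjection Q ∧ Q * E = E ∧
      ∀ T : H →L[ℂ] H, (∀ A ∈ M, T * (A * E) = 0) → T * Q = 0 := by
  set S : Set H := {y | ∃ A ∈ M, ∃ x : H, A (E x) = y} with hSdef
  set K : Submodule ℂ H := (Submodule.span ℂ S).topologicalClosure with hKdef
  have hKclosed : IsClosed (K : Set H) := (Submodule.span ℂ S).isClosed_topologicalClosure
  haveI : CompleteSpace K := hKclosed.completeSpace_coe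
  have hSK : S ⊆ (K : Set H) :=
    fun y hy => (Submodule.span ℂ S).le_topologicalClosure (Submodule.subset_span hy)
  have hKinv : ∀ T : H →L[ℂ] H, (∀ y ∈ S, T y ∈ K) → ∀ x ∈ K, T x ∈ K := by
    intro T hT x hx
    have h1 : Submodule.span ℂ S ≤ K.comap (T : H →ₗ[ℂ] H) :=
      Submodule.span_le.mpr (fun y hy => hT y hy)
    have h2 : IsClosed ((K.comap (T : H →ₗ[ℂ] H) : Submodule ℂ H) : Set H) := by
      have : ((K.comap (T : H →ₗ[ℂ] H) : Submodule ℂ H) : Set H) = T ⁻¹' (K : Set H) := rfl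
      rw [this]
      exact hKclosed.preimage T.continuous
    have h3 : K ≤ K.comap (T : H →ₗ[ℂ] H) :=
      Submodule.topologicalClosure_minimal _ h1 h2
    exact h3 hx
  have hMS : ∀ T, T ∈ M → ∀ y ∈ S, T y ∈ K := by
    rintro T hT y ⟨A, hA, x, rfl⟩
    exact hSK ⟨T * A, mul_mem hT hA, x, by simp [ContinuousLinearMap.mul_apply]⟩
  have hM'S : ∀ T, T ∈ M.commutant → ∀ y ∈ S, T y ∈ K := by
    rintro T hT y ⟨A, hA, x, rfl⟩
    have hTA : A * T = T * A := VonNeumannAlgebra.mem_commutant_iff.mp hT A hA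
    have hTE : E * T = T * E := VonNeumannAlgebra.mem_commutant_iff.mp hT E hE
    refine hSK ⟨A, hA, T x, ?_⟩
    have h1 : T (A (E x)) = A (T (E x)) := by
      have := congrFun (congrArg DFunLike.coe hTA) (E x)
      simpa [ContinuousLinearMap.mul_apply] using this.symm
    have h2 : T (E x) = E (T x) := by
      have := congrFun (congrArg DFunLike.coe hTE) x
      simpa [ContinuousLinearMap.mul_apply] using this.symm
    rw [h1, h2]
  set Q : H →L[ℂ] H := K.subtypeL ∘L K.orthogonalProjectionOnto with hQdef
  have hQmemK : ∀ x : H, Q x ∈ K := fun x => (K.orthogonalProjectionOnto x).2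
  have hQfix : ∀ x ∈ K, Q x = x := by
    intro x hx
    exact Submodule.starProjection_eq_self_iff.mpr hx
  have hstar : star Q = Q := isSelfAdjoint_starProjection K
  have hidem : Q * Q = Q := by
    ext x; exact hQfix _ (hQmemK x)
  have hQcommM' : ∀ T ∈ M.commutant, T * Q = Q * T := by
    intro T hT
    exact commute_proj_aux K T (hKinv T (hM'S T hT)) (hKinv (star T) (hM'S (star T) (star_mem hT)))
  have hQmem : Q ∈ M := by
    rw [← M.commutant_commutant]
    exact VonNeumannAlgebra.mem_commutant_iff.mpr (fun g hg => hQcommM' g hg)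
  have hQcommM : ∀ A ∈ M, Q * A = A * Q := by
    intro A hA
    exact (commute_proj_aux K A (hKinv A (hMS A hA)) (hKinv (star A) (hMS (star A) (star_mem hA)))).symm
  have hQE : Q * E = E := by
    ext x
    have : E x ∈ S := ⟨1, one_mem M, x, by simp⟩
    simpa [ContinuousLinearMap.mul_apply] using hQfix _ (hSK this)
  refine ⟨Q, ⟨⟨hQmem, hQcommM⟩, hidem, hstar⟩, hQE, ?_⟩
  intro T hT0
  have hker : ∀ x ∈ K, T x = 0 := by
    intro x hx
    have h1 : Submodule.span ℂ S ≤ LinearMap.ker (T : H →ₗ[ℂ] H) := by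
      refine Submodule.span_le.mpr ?_
      rintro y ⟨A, hA, x', rfl⟩
      have := congrFun (congrArg DFunLike.coe (hT0 A hA)) x'
      simpa [ContinuousLinearMap.mul_apply] using this
    have h2 : K ≤ LinearMap.ker (T : H →ₗ[ℂ] H) :=
      Submodule.topologicalClosure_minimal _ h1 (ContinuousLinearMap.isClosed_ker T)
    exact h2 hx
  ext x
  simpa [ContinuousLinearMap.mul_apply] using hker _ (hQmemK x)

set_option maxHeartbeats 4000000 in
theorem zero_case_generalized_derivation (M : VonNeumannAlgebra H) (hM : M.NoTypeI1)
    (L : (H →L[ℂ] H) → (H →L[ℂ] H))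
    (hmaps : ∀ A ∈ M, L A ∈ M)
    (hadd : ∀ A ∈ M, ∀ B ∈ M, L (A + B) = L A + L B)
    (hcond : ∀ A ∈ M, ∀ B ∈ M, A * B = 0 → L A * B + A * L B = 0) :
    M.IsCentral (L 1) ∧
    (∀ A ∈ M, ∀ B ∈ M,
      L (A * B) - L 1 * (A * B) = (L A - L 1 * A) * B + A * (L B - L 1 * B)) ∧
    (∀ A ∈ M, ∀ B ∈ M, L (A * B) = L A * B + A * L B - L 1 * (A * B)) := by
  obtain ⟨P, ⟨hPm, hPidem, -⟩, hcore, hcarrier⟩ := hM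
  have h1M : (1 : H →L[ℂ] H) ∈ M := one_mem M
  have h0M : (0 : H →L[ℂ] H) ∈ M := zero_mem M
  have hP'm : (1 : H →L[ℂ] H) - P ∈ M := sub_mem h1M hPm
  have hPP' : P * (1 - P) = 0 := by rw [mul_sub, mul_one, hPidem, sub_self]
  have hP'P : (1 - P) * P = 0 := by rw [sub_mul, one_mul, hPidem, sub_self]
  have hP'idem : (1 - P) * (1 - P) = 1 - P := by
    rw [mul_sub, mul_one, hP'P, sub_zero]
  have hL0 : L 0 = 0 := by
    have h := hadd 0 h0M 0 h0M
    rw [add_zero] at h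
    exact left_eq_add.mp h
  have hLsub : ∀ A ∈ M, ∀ B ∈ M, L (A - B) = L A - L B := by
    intro A hA B hB
    have h := hadd (A - B) (sub_mem hA hB) B hB
    rw [sub_add_cancel] at h
    exact eq_sub_of_add_eq h.symm
  -- Key identity I : multiplication by an idempotent on the left
  have keyI : ∀ Q, Q ∈ M → Q * Q = Q → ∀ A, A ∈ M →
      L (Q * A) = Q * L A + L Q * A - L 1 * (Q * A) := by
    intro Q hQ hQi A hA
    have hQA : Q * A ∈ M := mul_mem hQ hA
    have ha := hcond Q hQ ((1 - Q) * A) (mul_mem (sub_mem h1M hQ) hA) (by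
      rw [show Q * ((1 - Q) * A) = (Q - Q * Q) * A by noncomm_ring, hQi, sub_self, zero_mul])
    have hb := hcond (1 - Q) (sub_mem h1M hQ) (Q * A) hQA (by
      rw [show (1 - Q) * (Q * A) = (Q - Q * Q) * A by noncomm_ring, hQi, sub_self, zero_mul])
    rw [show (1 - Q) * A = A - Q * A by noncomm_ring] at ha
    rw [hLsub A hA (Q * A) hQA] at ha
    rw [hLsub 1 h1M Q hQ] at hb
    have key : L (Q * A) - (Q * L A + L Q * A - L 1 * (Q * A))
        = ((L 1 - L Q) * (Q * A) + (1 - Q) * L (Q * A))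
          - (L Q * (A - Q * A) + Q * (L A - L (Q * A))) := by noncomm_ring
    rw [ha, hb, sub_zero] at key
    exact sub_eq_zero.mp key
  -- Key identity II : multiplication by an idempotent on the right
  have keyII : ∀ Q, Q ∈ M → Q * Q = Q → ∀ A, A ∈ M →
      L (A * Q) = L A * Q + A * L Q - (A * Q) * L 1 := by
    intro Q hQ hQi A hA
    have hAQ : A * Q ∈ M := mul_mem hA hQ
    have ha := hcond (A * Q) hAQ (1 - Q) (sub_mem h1M hQ) (by
      rw [show (A * Q) * (1 - Q) = A * (Q - Q * Q) by noncomm_ring, hQi, sub_self, mul_zero])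
    have hb := hcond (A * (1 - Q)) (mul_mem hA (sub_mem h1M hQ)) Q hQ (by
      rw [show (A * (1 - Q)) * Q = A * (Q - Q * Q) by noncomm_ring, hQi, sub_self, mul_zero])
    rw [show A * (1 - Q) = A - A * Q by noncomm_ring] at hb
    rw [hLsub A hA (A * Q) hAQ] at hb
    rw [hLsub 1 h1M Q hQ] at ha
    have key : L (A * Q) - (L A * Q + A * L Q - (A * Q) * L 1)
        = (L (A * Q) * (1 - Q) + (A * Q) * (L 1 - L Q))
          - ((L A - L (A * Q)) * Q + (A - A * Q) * L Q) := by noncomm_ring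
    rw [ha, hb, sub_zero] at key
    exact sub_eq_zero.mp key
  -- L 1 commutes with every idempotent of M
  have hZidem : ∀ Q, Q ∈ M → Q * Q = Q → L 1 * Q = Q * L 1 := by
    intro Q hQ hQi
    have h := keyII Q hQ hQi 1 h1M
    simp only [one_mul] at h
    have key : L 1 * Q - Q * L 1 = (L 1 * Q + L Q - Q * L 1) - L Q := by abel
    rw [← h, sub_self] at key
    exact sub_eq_zero.mp key
  -- idempotents P + P*A*(1-P) and P + (1-P)*A*P
  have idem1 : ∀ A : H →L[ℂ] H, (P + P*A*(1-P)) * (P + P*A*(1-P)) = P + P*A*(1-P) := by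
    intro A
    have e1 : P * A * (1-P) * P = 0 := by rw [mul_assoc (P*A) (1-P) P, hP'P, mul_zero]
    have key : (P + P*A*(1-P)) * (P + P*A*(1-P))
        = P*P + (P*P)*A*(1-P) + (P*A*(1-P)*P) + (P*A*(1-P)*P)*(A*(1-P)) := by noncomm_ring
    rw [key, e1, hPidem, zero_mul, add_zero, add_zero]
  have idem2 : ∀ A : H →L[ℂ] H, (P + (1-P)*A*P) * (P + (1-P)*A*P) = P + (1-P)*A*P := by
    intro A
    have key : (P + (1-P)*A*P) * (P + (1-P)*A*P)
        = P*P + (P*(1-P))*(A*P) + (1-P)*A*(P*P) + ((1-P)*A)*((P*(1-P))*(A*P)) := by noncomm_ring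
    rw [key, hPP', hPidem, zero_mul, mul_zero, add_zero, add_zero]
  have hoff1m : ∀ A, A ∈ M → P*A*(1-P) ∈ M := fun A hA => mul_mem (mul_mem hPm hA) hP'm
  have hoff2m : ∀ A, A ∈ M → (1-P)*A*P ∈ M := fun A hA => mul_mem (mul_mem hP'm hA) hPm
  -- L 1 commutes with the off-diagonal corners
  have hZoffL : ∀ A, A ∈ M → L 1 * (P*A*(1-P)) = (P*A*(1-P)) * L 1 := by
    intro A hA
    have hQ'm : P + P*A*(1-P) ∈ M := add_mem hPm (hoff1m A hA)
    have h1 := hZidem (P + P*A*(1-P)) hQ'm (idem1 A)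
    have h2 := hZidem P hPm hPidem
    have key : L 1 * (P*A*(1-P)) - (P*A*(1-P)) * L 1
        = (L 1 * (P + P*A*(1-P)) - (P + P*A*(1-P)) * L 1) - (L 1 * P - P * L 1) := by
      noncomm_ring
    rw [h1, h2, sub_self, sub_self, sub_zero] at key
    exact sub_eq_zero.mp key
  have hZoffR : ∀ A, A ∈ M → L 1 * ((1-P)*A*P) = ((1-P)*A*P) * L 1 := by
    intro A hA
    have hQ'm : P + (1-P)*A*P ∈ M := add_mem hPm (hoff2m A hA)
    have h1 := hZidem (P + (1-P)*A*P) hQ'm (idem2 A)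
    have h2 := hZidem P hPm hPidem
    have key : L 1 * ((1-P)*A*P) - ((1-P)*A*P) * L 1
        = (L 1 * (P + (1-P)*A*P) - (P + (1-P)*A*P) * L 1) - (L 1 * P - P * L 1) := by
      noncomm_ring
    rw [h1, h2, sub_self, sub_self, sub_zero] at key
    exact sub_eq_zero.mp key
  -- annihilation lemmas from core/carrier conditions
  have hann1 : ∀ T : H →L[ℂ] H, (∀ B ∈ M, T * (B * (1 - P)) = 0) → T = 0 := by
    obtain ⟨Q, ⟨⟨hQm, hQc⟩, hQi, hQs⟩, hQE, hQkill⟩ := support_lemma M (1-P) hP'm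
    have hQ1 : Q = 1 := by
      have hRcp : M.IsCentralProjection (1 - Q) := by
        refine ⟨⟨sub_mem h1M hQm, fun A hA => by
          rw [sub_mul, one_mul, mul_sub, mul_one, hQc A hA]⟩, ?_, ?_⟩
        · rw [show (1-Q)*(1-Q) = 1 - Q - Q + Q*Q by noncomm_ring, hQi]; abel
        · rw [star_sub, star_one, hQs]
      have hRP : (1 - Q) * P = 1 - Q := by
        have key : (1-Q)*P - (1-Q) = Q*(1-P) - (1-P) := by noncomm_ring
        rw [hQE, sub_self] at key
        exact sub_eq_zero.mp key
      have h0 := hcore (1-Q) hRcp hRP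
      rw [sub_eq_zero] at h0
      exact h0.symm
    intro T hT
    have := hQkill T (fun A hA => hT A hA)
    rwa [hQ1, mul_one] at this
  have hann2 : ∀ T : H →L[ℂ] H, (∀ B ∈ M, T * (B * P) = 0) → T = 0 := by
    obtain ⟨Q, hQcp, hQE, hQkill⟩ := support_lemma M P hPm
    have hQ1 : Q = 1 := hcarrier Q hQcp hQE
    intro T hT
    have := hQkill T (fun A hA => hT A hA)
    rwa [hQ1, mul_one] at this
  -- centrality of L 1
  have hZP := hZidem P hPm hPidem
  have hZcorner1 : ∀ A, A ∈ M → L 1 * (P*A*P) = (P*A*P) * L 1 := by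
    intro A hA
    refine sub_eq_zero.mp (hann1 (L 1 * (P*A*P) - (P*A*P) * L 1) ?_)
    intro B hB
    have c1 := hZoffL (A*P*B) (mul_mem (mul_mem hA hPm) hB)
    have c2 := hZoffL B hB
    have key : (L 1 * (P*A*P) - (P*A*P) * L 1) * (B*(1-P))
        = (L 1 * (P*(A*P*B)*(1-P)) - (P*(A*P*B)*(1-P)) * L 1)
          - (P*A)*(L 1 * (P*B*(1-P)) - (P*B*(1-P)) * L 1)
          + (P*A)*((L 1 * P - P * L 1)*(B*(1-P))) := by noncomm_ring
    rw [c1, c2, hZP] at key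
    simp only [sub_self, mul_zero, zero_mul, sub_zero, add_zero] at key
    exact key
  have hZcorner2 : ∀ A, A ∈ M → L 1 * ((1-P)*A*(1-P)) = ((1-P)*A*(1-P)) * L 1 := by
    intro A hA
    have hZP' := hZidem (1-P) hP'm hP'idem
    refine sub_eq_zero.mp (hann2 (L 1 * ((1-P)*A*(1-P)) - ((1-P)*A*(1-P)) * L 1) ?_)
    intro B hB
    have c1 := hZoffR (A*(1-P)*B) (mul_mem (mul_mem hA hP'm) hB)
    have c2 := hZoffR B hB
    have key : (L 1 * ((1-P)*A*(1-P)) - ((1-P)*A*(1-P)) * L 1) * (B*P)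
        = (L 1 * ((1-P)*(A*(1-P)*B)*P) - ((1-P)*(A*(1-P)*B)*P) * L 1)
          - ((1-P)*A)*(L 1 * ((1-P)*B*P) - ((1-P)*B*P) * L 1)
          + ((1-P)*A)*((L 1 * (1-P) - (1-P) * L 1)*(B*P)) := by noncomm_ring
    rw [c1, c2, hZP'] at key
    simp only [sub_self, mul_zero, zero_mul, sub_zero, add_zero] at key
    exact key
  have hZc : ∀ A ∈ M, L 1 * A = A * L 1 := by
    intro A hA
    have key : L 1 * A - A * L 1
        = (L 1 * (P*A*P) - (P*A*P) * L 1) + (L 1 * (P*A*(1-P)) - (P*A*(1-P)) * L 1)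
          + (L 1 * ((1-P)*A*P) - ((1-P)*A*P) * L 1)
          + (L 1 * ((1-P)*A*(1-P)) - ((1-P)*A*(1-P)) * L 1) := by noncomm_ring
    rw [hZcorner1 A hA, hZoffL A hA, hZoffR A hA, hZcorner2 A hA] at key
    simp only [sub_self, add_zero, zero_add] at key
    exact sub_eq_zero.mp key
  -- the bilinear map measuring the failure of the generalized derivation law
  obtain ⟨g, hg⟩ : ∃ g : (H →L[ℂ] H) → (H →L[ℂ] H) → (H →L[ℂ] H),
      ∀ A B, g A B = L (A*B) - L A * B - A * L B + L 1 * (A*B) :=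
    ⟨fun A B => L (A*B) - L A * B - A * L B + L 1 * (A*B), fun _ _ => rfl⟩
  have hg_idemL : ∀ Q, Q ∈ M → Q * Q = Q → ∀ B, B ∈ M → g Q B = 0 := by
    intro Q hQ hQi B hB
    rw [hg, keyI Q hQ hQi B hB]
    abel
  have hg_idemR : ∀ B, B ∈ M → ∀ Q, Q ∈ M → Q * Q = Q → g B Q = 0 := by
    intro B hB Q hQ hQi
    rw [hg, keyII Q hQ hQi B hB, hZc (B*Q) (mul_mem hB hQ)]
    abel
  have hg_zeroR : ∀ A, g A 0 = 0 := by
    intro A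
    rw [hg]
    simp [hL0]
  have hg_addL : ∀ A, A ∈ M → ∀ A', A' ∈ M → ∀ B, B ∈ M →
      g (A + A') B = g A B + g A' B := by
    intro A hA A' hA' B hB
    rw [hg, hg, hg, show (A + A') * B = A*B + A'*B from add_mul A A' B,
      hadd (A*B) (mul_mem hA hB) (A'*B) (mul_mem hA' hB), hadd A hA A' hA']
    noncomm_ring
  have hg_addR : ∀ A, A ∈ M → ∀ B, B ∈ M → ∀ B', B' ∈ M →
      g A (B + B') = g A B + g A B' := by
    intro A hA B hB B' hB'
    rw [hg, hg, hg, show A * (B + B') = A*B + A*B' from mul_add A B B',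
      hadd (A*B) (mul_mem hA hB) (A*B') (mul_mem hA hB'), hadd B hB B' hB']
    noncomm_ring
  have hg_subL : ∀ A, A ∈ M → ∀ A', A' ∈ M → ∀ B, B ∈ M →
      g (A - A') B = g A B - g A' B := by
    intro A hA A' hA' B hB
    have h := hg_addL (A - A') (sub_mem hA hA') A' hA' B hB
    rw [sub_add_cancel] at h
    exact eq_sub_of_add_eq h.symm
  have hg_subR : ∀ A, A ∈ M → ∀ B, B ∈ M → ∀ B', B' ∈ M →
      g A (B - B') = g A B - g A B' := by
    intro A hA B hB B' hB'
    have h := hg_addR A hA (B - B') (sub_mem hB hB') B' hB'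
    rw [sub_add_cancel] at h
    exact eq_sub_of_add_eq h.symm
  have hg_offL1 : ∀ A, A ∈ M → ∀ B, B ∈ M → g (P*A*(1-P)) B = 0 := by
    intro A hA B hB
    have h := hg_subL (P + P*A*(1-P)) (add_mem hPm (hoff1m A hA)) P hPm B hB
    rw [add_sub_cancel_left] at h
    rw [h, hg_idemL (P + P*A*(1-P)) (add_mem hPm (hoff1m A hA)) (idem1 A) B hB,
      hg_idemL P hPm hPidem B hB, sub_zero]
  have hg_offL2 : ∀ A, A ∈ M → ∀ B, B ∈ M → g ((1-P)*A*P) B = 0 := by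
    intro A hA B hB
    have h := hg_subL (P + (1-P)*A*P) (add_mem hPm (hoff2m A hA)) P hPm B hB
    rw [add_sub_cancel_left] at h
    rw [h, hg_idemL (P + (1-P)*A*P) (add_mem hPm (hoff2m A hA)) (idem2 A) B hB,
      hg_idemL P hPm hPidem B hB, sub_zero]
  have hg_offR1 : ∀ B, B ∈ M → ∀ A, A ∈ M → g B (P*A*(1-P)) = 0 := by
    intro B hB A hA
    have h := hg_subR B hB (P + P*A*(1-P)) (add_mem hPm (hoff1m A hA)) P hPm
    rw [add_sub_cancel_left] at h
    rw [h, hg_idemR B hB (P + P*A*(1-P)) (add_mem hPm (hoff1m A hA)) (idem1 A),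
      hg_idemR B hB P hPm hPidem, sub_zero]
  have hg_offR2 : ∀ B, B ∈ M → ∀ A, A ∈ M → g B ((1-P)*A*P) = 0 := by
    intro B hB A hA
    have h := hg_subR B hB (P + (1-P)*A*P) (add_mem hPm (hoff2m A hA)) P hPm
    rw [add_sub_cancel_left] at h
    rw [h, hg_idemR B hB (P + (1-P)*A*P) (add_mem hPm (hoff2m A hA)) (idem2 A),
      hg_idemR B hB P hPm hPidem, sub_zero]
  have hg_oneR : ∀ B, B ∈ M → g B 1 = 0 := fun B hB =>
    hg_idemR B hB 1 h1M (one_mul 1)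
  have hg_P'R : ∀ B, B ∈ M → g B (1 - P) = 0 := by
    intro B hB
    rw [hg_subR B hB 1 h1M P hPm, hg_oneR B hB, hg_idemR B hB P hPm hPidem, sub_zero]
  -- Hochschild 2-cocycle identity for g
  have hcoc : ∀ A, A ∈ M → ∀ B C : H →L[ℂ] H,
      A * g B C - g (A*B) C + g A (B*C) - g A B * C = 0 := by
    intro A hA B C
    have hZA := hZc A hA
    rw [hg, hg, hg, hg, ← mul_assoc A B C]
    have key : A * (L (B*C) - L B * C - B * L C + L 1 * (B*C))
        - (L (A*B*C) - L (A*B) * C - (A*B) * L C + L 1 * (A*B*C))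
        + (L (A*B*C) - L A * (B*C) - A * L (B*C) + L 1 * (A*B*C))
        - (L (A*B) - L A * B - A * L B + L 1 * (A*B)) * C
        = (A * L 1 - L 1 * A) * (B*C) := by noncomm_ring
    rw [key, hZA, sub_self, zero_mul]
  -- the (1,1) corner
  have hg11 : ∀ A, A ∈ M → ∀ B, B ∈ M → g (P*A*P) (P*B*P) = 0 := by
    intro A hA B hB
    have hA1 : P*A*P ∈ M := mul_mem (mul_mem hPm hA) hPm
    have hB1 : P*B*P ∈ M := mul_mem (mul_mem hPm hB) hPm
    have step0 : (P*B*P) * (1-P) = 0 := by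
      rw [show (P*B*P)*(1-P) = (P*B)*(P*(1-P)) by noncomm_ring, hPP', mul_zero]
    have step1 : g (P*A*P) (P*B*P) * (1-P) = 0 := by
      have hc := hcoc (P*A*P) hA1 (P*B*P) (1-P)
      rw [hg_P'R (P*B*P) hB1, hg_P'R ((P*A*P)*(P*B*P)) (mul_mem hA1 hB1), step0,
        hg_zeroR, mul_zero] at hc
      have key : g (P*A*P) (P*B*P) * (1-P)
          = -(0 - 0 + 0 - g (P*A*P) (P*B*P) * (1-P)) := by abel
      rw [hc, neg_zero] at key
      exact key
    have stepP : g (P*A*P) (P*B*P) * P = 0 := by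
      refine hann1 (g (P*A*P) (P*B*P) * P) ?_
      intro C hC
      have hc := hcoc (P*A*P) hA1 (P*B*P) (P*C*(1-P))
      rw [hg_offR1 (P*B*P) hB1 C hC,
        hg_offR1 ((P*A*P)*(P*B*P)) (mul_mem hA1 hB1) C hC,
        show (P*B*P)*(P*C*(1-P)) = P*(B*P*P*C)*(1-P) by noncomm_ring,
        hg_offR1 (P*A*P) hA1 (B*P*P*C) (mul_mem (mul_mem (mul_mem hB hPm) hPm) hC),
        mul_zero] at hc
      have key : (g (P*A*P) (P*B*P) * P) * (C * (1-P))
          = -(0 - 0 + 0 - g (P*A*P) (P*B*P) * (P*C*(1-P))) := by noncomm_ring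
      rw [hc, neg_zero] at key
      exact key
    have key : g (P*A*P) (P*B*P)
        = g (P*A*P) (P*B*P) * P + g (P*A*P) (P*B*P) * (1-P) := by noncomm_ring
    rw [key, step1, stepP, add_zero]
  -- the (2,2) corner
  have hg22 : ∀ A, A ∈ M → ∀ B, B ∈ M → g ((1-P)*A*(1-P)) ((1-P)*B*(1-P)) = 0 := by
    intro A hA B hB
    have hA2 : (1-P)*A*(1-P) ∈ M := mul_mem (mul_mem hP'm hA) hP'm
    have hB2 : (1-P)*B*(1-P) ∈ M := mul_mem (mul_mem hP'm hB) hP'm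
    have step0 : ((1-P)*B*(1-P)) * P = 0 := by
      rw [show ((1-P)*B*(1-P))*P = ((1-P)*B)*((1-P)*P) by noncomm_ring, hP'P, mul_zero]
    have step1 : g ((1-P)*A*(1-P)) ((1-P)*B*(1-P)) * P = 0 := by
      have hc := hcoc ((1-P)*A*(1-P)) hA2 ((1-P)*B*(1-P)) P
      rw [hg_idemR ((1-P)*B*(1-P)) hB2 P hPm hPidem,
        hg_idemR (((1-P)*A*(1-P))*((1-P)*B*(1-P))) (mul_mem hA2 hB2) P hPm hPidem, step0,
        hg_zeroR, mul_zero] at hc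
      have key : g ((1-P)*A*(1-P)) ((1-P)*B*(1-P)) * P
          = -(0 - 0 + 0 - g ((1-P)*A*(1-P)) ((1-P)*B*(1-P)) * P) := by abel
      rw [hc, neg_zero] at key
      exact key
    have stepP : g ((1-P)*A*(1-P)) ((1-P)*B*(1-P)) * (1-P) = 0 := by
      refine hann2 (g ((1-P)*A*(1-P)) ((1-P)*B*(1-P)) * (1-P)) ?_
      intro C hC
      have hc := hcoc ((1-P)*A*(1-P)) hA2 ((1-P)*B*(1-P)) ((1-P)*C*P)
      rw [hg_offR2 ((1-P)*B*(1-P)) hB2 C hC,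
        hg_offR2 (((1-P)*A*(1-P))*((1-P)*B*(1-P))) (mul_mem hA2 hB2) C hC,
        show ((1-P)*B*(1-P))*((1-P)*C*P) = (1-P)*(B*(1-P)*(1-P)*C)*P by noncomm_ring,
        hg_offR2 ((1-P)*A*(1-P)) hA2 (B*(1-P)*(1-P)*C)
          (mul_mem (mul_mem (mul_mem hB hP'm) hP'm) hC),
        mul_zero] at hc
      have key : (g ((1-P)*A*(1-P)) ((1-P)*B*(1-P)) * (1-P)) * (C * P)
          = -(0 - 0 + 0 - g ((1-P)*A*(1-P)) ((1-P)*B*(1-P)) * ((1-P)*C*P)) := by noncomm_ring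
      rw [hc, neg_zero] at key
      exact key
    have key : g ((1-P)*A*(1-P)) ((1-P)*B*(1-P))
        = g ((1-P)*A*(1-P)) ((1-P)*B*(1-P)) * P
          + g ((1-P)*A*(1-P)) ((1-P)*B*(1-P)) * (1-P) := by noncomm_ring
    rw [key, step1, stepP, zero_add]
  -- orthogonal corners
  have hgorth1 : ∀ A, A ∈ M → ∀ B, B ∈ M → g (P*A*P) ((1-P)*B*(1-P)) = 0 := by
    intro A hA B hB
    have hA1 : P*A*P ∈ M := mul_mem (mul_mem hPm hA) hPm
    have hB2 : (1-P)*B*(1-P) ∈ M := mul_mem (mul_mem hP'm hB) hP'm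
    have hprod : (P*A*P) * ((1-P)*B*(1-P)) = 0 := by
      rw [show (P*A*P)*((1-P)*B*(1-P)) = (P*A)*((P*(1-P))*(B*(1-P))) by noncomm_ring,
        hPP', zero_mul, mul_zero]
    have hc := hcond (P*A*P) hA1 ((1-P)*B*(1-P)) hB2 hprod
    rw [hg, hprod, hL0, mul_zero]
    have key : 0 - L (P*A*P) * ((1-P)*B*(1-P)) - (P*A*P) * L ((1-P)*B*(1-P)) + 0
        = -(L (P*A*P) * ((1-P)*B*(1-P)) + (P*A*P) * L ((1-P)*B*(1-P))) := by abel
    rw [key, hc, neg_zero]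
  have hgorth2 : ∀ A, A ∈ M → ∀ B, B ∈ M → g ((1-P)*A*(1-P)) (P*B*P) = 0 := by
    intro A hA B hB
    have hA2 : (1-P)*A*(1-P) ∈ M := mul_mem (mul_mem hP'm hA) hP'm
    have hB1 : P*B*P ∈ M := mul_mem (mul_mem hPm hB) hPm
    have hprod : ((1-P)*A*(1-P)) * (P*B*P) = 0 := by
      rw [show ((1-P)*A*(1-P))*(P*B*P) = ((1-P)*A)*(((1-P)*P)*(B*P)) by noncomm_ring,
        hP'P, zero_mul, mul_zero]
    have hc := hcond ((1-P)*A*(1-P)) hA2 (P*B*P) hB1 hprod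
    rw [hg, hprod, hL0, mul_zero]
    have key : 0 - L ((1-P)*A*(1-P)) * (P*B*P) - ((1-P)*A*(1-P)) * L (P*B*P) + 0
        = -(L ((1-P)*A*(1-P)) * (P*B*P) + ((1-P)*A*(1-P)) * L (P*B*P)) := by abel
    rw [key, hc, neg_zero]
  -- assemble : g vanishes identically on M
  have hgall : ∀ A ∈ M, ∀ B ∈ M, g A B = 0 := by
    intro A hA B hB
    have hA1 : P*A*P ∈ M := mul_mem (mul_mem hPm hA) hPm
    have hA2 : (1-P)*A*(1-P) ∈ M := mul_mem (mul_mem hP'm hA) hP'm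
    have hdiagB : ∀ X, X ∈ M → (∀ C, C ∈ M → g X (P*C*P) = 0) →
        (∀ C, C ∈ M → g X ((1-P)*C*(1-P)) = 0) → g X B = 0 := by
      intro X hX h11 h22
      have hBeq : B = P*B*P + P*B*(1-P) + ((1-P)*B*P + (1-P)*B*(1-P)) := by noncomm_ring
      calc g X B = g X (P*B*P + P*B*(1-P) + ((1-P)*B*P + (1-P)*B*(1-P))) := by rw [← hBeq]
        _ = 0 := by
          rw [hg_addR X hX (P*B*P + P*B*(1-P))
              (add_mem (mul_mem (mul_mem hPm hB) hPm) (hoff1m B hB))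
              ((1-P)*B*P + (1-P)*B*(1-P))
              (add_mem (hoff2m B hB) (mul_mem (mul_mem hP'm hB) hP'm)),
            hg_addR X hX (P*B*P) (mul_mem (mul_mem hPm hB) hPm) (P*B*(1-P)) (hoff1m B hB),
            hg_addR X hX ((1-P)*B*P) (hoff2m B hB) ((1-P)*B*(1-P))
              (mul_mem (mul_mem hP'm hB) hP'm),
            h11 B hB, h22 B hB, hg_offR1 X hX B hB, hg_offR2 X hX B hB]
          simp
    have hAeq : A = P*A*P + P*A*(1-P) + ((1-P)*A*P + (1-P)*A*(1-P)) := by noncomm_ring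
    calc g A B = g (P*A*P + P*A*(1-P) + ((1-P)*A*P + (1-P)*A*(1-P))) B := by rw [← hAeq]
      _ = 0 := by
        rw [hg_addL (P*A*P + P*A*(1-P)) (add_mem hA1 (hoff1m A hA))
            ((1-P)*A*P + (1-P)*A*(1-P)) (add_mem (hoff2m A hA) hA2) B hB,
          hg_addL (P*A*P) hA1 (P*A*(1-P)) (hoff1m A hA) B hB,
          hg_addL ((1-P)*A*P) (hoff2m A hA) ((1-P)*A*(1-P)) hA2 B hB,
          hg_offL1 A hA B hB, hg_offL2 A hA B hB,
          hdiagB (P*A*P) hA1 (fun C hC => hg11 A hA C hC) (fun C hC => hgorth1 A hA C hC),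
          hdiagB ((1-P)*A*(1-P)) hA2 (fun C hC => hgorth2 A hA C hC)
            (fun C hC => hg22 A hA C hC)]
        simp
  -- conclusions
  have third : ∀ A ∈ M, ∀ B ∈ M, L (A * B) = L A * B + A * L B - L 1 * (A * B) := by
    intro A hA B hB
    have h := hgall A hA B hB
    rw [hg] at h
    have key : L (A*B) - (L A * B + A * L B - L 1 * (A*B))
        = L (A*B) - L A * B - A * L B + L 1 * (A*B) := by abel
    rw [h] at key
    exact sub_eq_zero.mp key
  refine ⟨⟨hmaps 1 h1M, hZc⟩, ?_, third⟩
  intro A hA B hB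
  have h3 := third A hA B hB
  have hZA := hZc A hA
  have key : (L (A * B) - L 1 * (A * B)) - ((L A - L 1 * A) * B + A * (L B - L 1 * B))
      = (L (A*B) - (L A * B + A * L B - L 1 * (A * B)))
        + (A * L 1 - L 1 * A) * B := by noncomm_ring
  rw [show L (A*B) - (L A * B + A * L B - L 1 * (A * B)) = 0 from sub_eq_zero.mpr h3,
    show A * L 1 - L 1 * A = 0 by rw [hZA, sub_self], zero_mul, add_zero] at key
  exact sub_eq_zero.mp key
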